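/- Let x₁, y₁ ∈ ℂ be nonzero with x₁ ≠ y₁. If 1/(x₁−y₁) − x₁³ = 0 and −1/(y₁−x₁) − y₁³ = 0, then y₁ = ω·x₁ where ω² + ω + 1 = 0, and x₁⁴ = 1/(1−ω). -/

import Mathlib

/-- If 1/(x₁−y₁) − x₁³ = 0 and −1/(y₁−x₁) − y₁³ = 0 with x₁, y₁ nonzero and distinct,
then y₁ = ω·x₁ with ω² + ω + 1 = 0 and x₁⁴ = 1/(1−ω). -/
theorem stmt7 (x₁ y₁ : ℂ) (hx : x₁ ≠ 0) (hy : y₁ ≠ 0) (hxy : x₁ ≠ y₁)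
    (h1 : 1 / (x₁ - y₁) - x₁ ^ 3 = 0)
    (h2 : -(1 / (y₁ - x₁)) - y₁ ^ 3 = 0) :
    ∃ ω : ℂ, ω ^ 2 + ω + 1 = 0 ∧ y₁ = ω * x₁ ∧ x₁ ^ 4 = 1 / (1 - ω) := by
  have hd : x₁ - y₁ ≠ 0 := sub_ne_zero.mpr hxy
  have hd' : y₁ - x₁ ≠ 0 := sub_ne_zero.mpr (Ne.symm hxy)
  have e1 : x₁ ^ 3 * (x₁ - y₁) = 1 := by
    field_simp at h1; linear_combination -h1
  have e2 : y₁ ^ 3 * (x₁ - y₁) = 1 := by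
    field_simp at h2; linear_combination h2
  set ω := y₁ / x₁ with hω
  have hyx : y₁ = ω * x₁ := by rw [hω, div_mul_cancel₀ _ hx]
  have hω1 : ω ≠ 1 := by
    intro h
    apply hxy
    have := hyx
    rw [h, one_mul] at this
    exact this.symm
  have hcube : ω ^ 3 = 1 := by
    have hxy3 : x₁ ^ 3 = y₁ ^ 3 := by
      have := mul_right_cancel₀ hd (e1.trans e2.symm)
      exact this
    rw [hω, div_pow, div_eq_one_iff_eq (pow_ne_zero 3 hx)]
    linear_combination -hxy3
  have hquad : ω ^ 2 + ω + 1 = 0 := by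
    have : (ω - 1) * (ω ^ 2 + ω + 1) = 0 := by linear_combination hcube
    rcases mul_eq_zero.mp this with h | h
    · exact absurd (sub_eq_zero.mp h) hω1
    · exact h
  refine ⟨ω, hquad, hyx, ?_⟩
  have h1ω : (1 : ℂ) - ω ≠ 0 := fun h => hω1 (by linear_combination -h)
  rw [eq_div_iff h1ω]
  have : x₁ ^ 4 * (1 - ω) = x₁ ^ 3 * (x₁ - y₁) := by
    rw [hyx]; ring
  rw [this, e1]
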